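/- For each n ≥ 1, the quotient k-vector space k[x]₀/U_n has dimension q^{2n} − 1. -/

import Mathlib

open Polynomial

variable (k : Type*) [Field k] [Fintype k]

/-- `k[x]₀`: the free non-unital associative `k`-algebra on one generator `x`,
identified with the polynomials over `k` with zero constant term,
viewed as a `k`-submodule of `Polynomial k`. -/
noncomputable def A0 : Submodule k (Polynomial k) :=
  LinearMap.ker (Polynomial.aeval (0 : k)).toLinearMap

/-- A `T`-space of `k[x]₀`: a `k`-linear subspace of `k[x]₀` closed under
substitutions `f ↦ f ∘ g` for `g ∈ k[x]₀`. -/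
def IsTSpace (V : Submodule k (Polynomial k)) : Prop :=
  V ≤ A0 k ∧ ∀ f ∈ V, ∀ g ∈ A0 k, f.comp g ∈ V

/-- `H^S`: the smallest `T`-space of `k[x]₀` containing `H`. -/
noncomputable def TSp (H : Set (Polynomial k)) : Submodule k (Polynomial k) :=
  sInf {V | IsTSpace k V ∧ H ⊆ V}

/-- A `T`-ideal of `k[x]₀`: a `T`-space that is also an ideal of `k[x]₀`. -/
def IsTIdeal (V : Submodule k (Polynomial k)) : Prop :=
  IsTSpace k V ∧ ∀ f ∈ V, ∀ g ∈ A0 k, g * f ∈ V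

/-- `H^T`: the smallest `T`-ideal of `k[x]₀` containing `H`. -/
noncomputable def TId (H : Set (Polynomial k)) : Submodule k (Polynomial k) :=
  sInf {V | IsTIdeal k V ∧ H ⊆ V}

/-- `W_n = {x + x^{q^n}}^S + {x^{q^n+1}}^S`, where `q` is the order of `k`. -/
noncomputable def Wn (n : ℕ) : Submodule k (Polynomial k) :=
  TSp k {X + X ^ (Fintype.card k ^ n)} ⊔ TSp k {X ^ (Fintype.card k ^ n + 1)}

/-- `U_n = {x - x^{q^{2n}}}^T`, where `q` is the order of `k`. -/
noncomputable def Un (n : ℕ) : Submodule k (Polynomial k) :=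
  TId k {X - X ^ (Fintype.card k ^ (2 * n))}

section Aux

variable {k}

omit [Fintype k] in
lemma mem_A0_iff {f : k[X]} : f ∈ A0 k ↔ f.coeff 0 = 0 := by
  have : (aeval (0 : k)) f = f.coeff 0 := by
    rw [coeff_zero_eq_eval_zero, ← coe_aeval_eq_eval]
  simp [A0, LinearMap.mem_ker, this]

lemma key_dvd (s : ℕ) (g : k[X]) :
    (X ^ (Fintype.card k ^ s) - X : k[X]) ∣ g ^ (Fintype.card k ^ s) - g := by
  set p := ringChar k with hp'
  haveI : CharP k p := ringChar.charP k
  obtain ⟨t, hp, hcard⟩ := FiniteField.card k p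
  haveI : CharP k[X] p := charP_of_injective_algebraMap' (A := k[X]) k p
  haveI : ExpChar k[X] p := ExpChar.prime hp
  have hm : Fintype.card k ^ s = p ^ ((t : ℕ) * s) := by rw [hcard, ← pow_mul]
  induction g using Polynomial.induction_on' with
  | add f g hf hg =>
      have hfd : (f + g) ^ (Fintype.card k ^ s)
          = f ^ (Fintype.card k ^ s) + g ^ (Fintype.card k ^ s) := by
        rw [hm]; exact add_pow_expChar_pow f g p ((t : ℕ) * s)
      have : (f + g) ^ (Fintype.card k ^ s) - (f + g)
          = (f ^ (Fintype.card k ^ s) - f) + (g ^ (Fintype.card k ^ s) - g) := by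
        rw [hfd]; ring
      rw [this]; exact dvd_add hf hg
  | monomial i c =>
      rw [← C_mul_X_pow_eq_monomial, mul_pow, ← C_pow, FiniteField.pow_card_pow,
        pow_right_comm, ← mul_sub]
      exact (sub_dvd_pow_sub_pow _ _ i).mul_left (C c)

/-- The `k`-submodule of multiples of `X^{q^{2n}} - X`. -/
noncomputable def Vm (n : ℕ) : Submodule k (Polynomial k) :=
  (Ideal.span {(X : k[X]) ^ (Fintype.card k ^ (2 * n)) - X}).restrictScalars k

lemma mem_Vm {n : ℕ} {f : k[X]} :
    f ∈ (Vm n : Submodule k (Polynomial k)) ↔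
      ((X : k[X]) ^ (Fintype.card k ^ (2 * n)) - X) ∣ f := by
  simp [Vm, Ideal.mem_span_singleton]

lemma coeff_zero_XmX (n : ℕ) :
    ((X : k[X]) ^ (Fintype.card k ^ (2 * n)) - X).coeff 0 = 0 := by
  have hm : (0:ℕ) < Fintype.card k ^ (2 * n) := by positivity
  simp [coeff_X_pow, hm.ne]

lemma isTIdeal_Vm (n : ℕ) : IsTIdeal k (Vm n) := by
  refine ⟨⟨?_, ?_⟩, ?_⟩
  · intro f hf
    rw [mem_Vm] at hf
    obtain ⟨h, rfl⟩ := hf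
    rw [mem_A0_iff, mul_coeff_zero, coeff_zero_XmX, zero_mul]
  · intro f hf g hg
    rw [mem_Vm] at hf ⊢
    obtain ⟨h, rfl⟩ := hf
    rw [mul_comp, sub_comp, pow_comp, X_comp]
    exact Dvd.dvd.mul_right (key_dvd (2 * n) g) _
  · intro f hf g hg
    rw [mem_Vm] at hf ⊢
    exact hf.mul_left g

lemma Un_eq_Vm (n : ℕ) : Un k n = (Vm n : Submodule k (Polynomial k)) := by
  apply le_antisymm
  · apply sInf_le
    refine ⟨isTIdeal_Vm n, ?_⟩
    intro f hf
    rw [Set.mem_singleton_iff] at hf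
    subst hf
    rw [SetLike.mem_coe, mem_Vm]
    exact ⟨-1, by ring⟩
  · intro f hf
    rw [mem_Vm] at hf
    obtain ⟨h, rfl⟩ := hf
    rw [Un, TId, Submodule.mem_sInf]
    rintro V ⟨⟨⟨hVA0, hcomp⟩, hmul⟩, hgen⟩
    have hXm : ((X : k[X]) ^ (Fintype.card k ^ (2 * n)) - X) ∈ V := by
      have h1 : ((X : k[X]) - X ^ (Fintype.card k ^ (2 * n))) ∈ V :=
        hgen (Set.mem_singleton _)
      have := neg_mem h1
      simpa using this
    have hmem : (h - C (h.coeff 0)) ∈ A0 k := by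
      rw [mem_A0_iff]
      simp
    have h1 : (h - C (h.coeff 0)) * ((X : k[X]) ^ (Fintype.card k ^ (2 * n)) - X) ∈ V :=
      hmul _ hXm _ hmem
    have h2 : ((X : k[X]) ^ (Fintype.card k ^ (2 * n)) - X) * h
        = (h - C (h.coeff 0)) * ((X : k[X]) ^ (Fintype.card k ^ (2 * n)) - X)
          + h.coeff 0 • ((X : k[X]) ^ (Fintype.card k ^ (2 * n)) - X) := by
      rw [smul_eq_C_mul]; ring
    rw [h2]
    exact add_mem h1 (Submodule.smul_mem _ _ hXm)

end Aux

/-- For each `n ≥ 1`, `dim k[x]₀/U_n = q^{2n} - 1`. -/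
theorem finrank_quotient_Un (n : ℕ) (hn : 1 ≤ n) :
    Module.finrank k (↥(A0 k) ⧸ (Un k n).comap (A0 k).subtype) =
      Fintype.card k ^ (2 * n) - 1 := by
  classical
  set q := Fintype.card k with hq
  set m := q ^ (2 * n) with hmdef
  have hq2 : 2 ≤ q := Fintype.one_lt_card
  have hm2 : 2 ≤ m := le_trans hq2 (Nat.le_self_pow (by omega) q)
  set d := m - 1 with hd
  have hdm : d + 1 = m := by omega
  have hmonic : ((X : k[X]) ^ m - X).Monic := by
    apply monic_X_pow_sub
    rw [degree_X]
    exact_mod_cast (by omega : 1 < m)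
  have hdeg : ((X : k[X]) ^ m - X).degree = (m : WithBot ℕ) := by
    have h1 : (X : k[X]).degree < ((X : k[X]) ^ m).degree := by
      rw [degree_X, degree_X_pow]
      exact_mod_cast (by omega : 1 < m)
    rw [degree_sub_eq_left_of_degree_lt h1, degree_X_pow]
  -- the reduction map
  set ψ : (A0 k) →ₗ[k] (Fin d → k) :=
    (LinearMap.pi fun i : Fin d =>
      (lcoeff k ((i : ℕ) + 1)).comp (modByMonicHom ((X : k[X]) ^ m - X))).comp
      (A0 k).subtype with hψ
  have hψ_apply : ∀ (f : A0 k) (i : Fin d),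
      ψ f i = ((f : k[X]) %ₘ ((X : k[X]) ^ m - X)).coeff ((i : ℕ) + 1) := by
    intro f i
    rfl
  have hsurj : Function.Surjective ψ := by
    intro v
    set r : k[X] := ∑ j : Fin d, monomial ((j : ℕ) + 1) (v j) with hr
    have hrA0 : r ∈ A0 k := by
      rw [mem_A0_iff, hr, finset_sum_coeff]
      simp [coeff_monomial]
    have hrdeg : r.degree < ((X : k[X]) ^ m - X).degree := by
      rw [hdeg, hr]
      apply lt_of_le_of_lt (degree_sum_le _ _)
      rw [Finset.sup_lt_iff (by exact_mod_cast WithBot.bot_lt_coe m)]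
      intro j _
      apply lt_of_le_of_lt (degree_monomial_le _ _)
      exact_mod_cast (by omega : (j : ℕ) + 1 < m)
    have hrmod : r %ₘ ((X : k[X]) ^ m - X) = r := (modByMonic_eq_self_iff hmonic).2 hrdeg
    refine ⟨⟨r, hrA0⟩, ?_⟩
    funext i
    rw [hψ_apply, hrmod, hr, finset_sum_coeff]
    simp only [coeff_monomial, add_left_inj, Fin.val_inj]
    rw [Finset.sum_ite_eq' Finset.univ i fun j => v j]
    simp
  have hker : LinearMap.ker ψ = (Un k n).comap (A0 k).subtype := by
    ext f
    rw [LinearMap.mem_ker, Submodule.mem_comap, Submodule.subtype_apply, Un_eq_Vm, mem_Vm]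
    constructor
    · intro h0
      rw [← modByMonic_eq_zero_iff_dvd hmonic]
      ext j
      rcases j with _ | j
      · have heq := modByMonic_add_div (f : k[X]) ((X : k[X]) ^ m - X)
        have : (f : k[X]) %ₘ ((X : k[X]) ^ m - X)
            = (f : k[X]) - ((X : k[X]) ^ m - X) * ((f : k[X]) /ₘ ((X : k[X]) ^ m - X)) := by
          linear_combination heq
        rw [this, coeff_sub, mul_coeff_zero]
        have h1 : ((X : k[X]) ^ m - X).coeff 0 = 0 := coeff_zero_XmX n
        rw [h1, zero_mul, mem_A0_iff.1 f.2, sub_zero, coeff_zero]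
      · by_cases hj : j < d
        · have := congrFun h0 ⟨j, hj⟩
          rw [hψ_apply] at this
          simpa using this
        · apply coeff_eq_zero_of_degree_lt
          apply lt_of_lt_of_le (degree_modByMonic_lt _ hmonic)
          rw [hdeg]
          exact_mod_cast (by omega : m ≤ j + 1)
    · intro hdvd
      have h0 : (f : k[X]) %ₘ ((X : k[X]) ^ m - X) = 0 :=
        (modByMonic_eq_zero_iff_dvd hmonic).2 hdvd
      funext i
      rw [hψ_apply, h0]
      simp
  have e1 : ((A0 k) ⧸ LinearMap.ker ψ) ≃ₗ[k] (Fin d → k) :=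
    ψ.quotKerEquivOfSurjective hsurj
  have e2 := Submodule.quotEquivOfEq _ _ hker
  have e := e2.symm.trans e1
  rw [e.finrank_eq]
  simp [Module.finrank_pi]
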